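/- In an S-Motzkin path produced by the greedy insertion of horizontal steps into a Dyck path (each h placed in the leftmost admissible position), there do not exist two horizontal steps at the same height such that all steps strictly between them lie at or above that height. -/

import Mathlib

inductive Step : Type
  | u : Step
  | d : Step
  | h : Step
deriving DecidableEq, Repr

def stepVal : Step → ℤ
  | Step.u => 1
  | Step.d => -1
  | Step.h => 0

/-- Sum of step values (final height) of a word. -/
def hsum (w : List Step) : ℤ := (w.map stepVal).sum

/-- All prefixes have nonnegative height. -/
def NonnegPrefixes (w : List Step) : Prop := ∀ p : List Step, p <+: w → 0 ≤ hsum p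

/-- A Motzkin path: nonnegative prefix heights and total height 0. -/
def IsMotzkin (w : List Step) : Prop := NonnegPrefixes w ∧ hsum w = 0

/-- The word (hu)^n. -/
def huWord (n : ℕ) : List Step := (List.replicate n [Step.h, Step.u]).flatten

/-- An S-Motzkin path with n up, n down, n horizontal steps:
a Motzkin path whose subword of non-down steps is (hu)^n. -/
def IsSMotzkin (n : ℕ) (w : List Step) : Prop :=
  IsMotzkin w ∧ w.count Step.u = n ∧ w.count Step.d = n ∧ w.count Step.h = n ∧
    w.filter (fun s => s ≠ Step.d) = huWord n

/-- A nonempty word over {h, u}. -/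
def HUBlock (A : List Step) : Prop := A ≠ [] ∧ ∀ s ∈ A, s = Step.h ∨ s = Step.u

/-- Glue blocks A_i with runs of d_i down steps: A_0 d^{d_1} A_1 d^{d_2} ... -/
def joinAM (As : List (List Step)) (ds : List ℕ) : List Step :=
  (List.zipWith (fun A k => A ++ List.replicate k Step.d) As ds).flatten

/-- w decomposes as A_0 D_1 A_1 D_2 ... A_{t-1} D_t with A_i nonempty over {h,u}
and D_i nonempty runs of down steps. -/
def AMDecomp (w : List Step) (As : List (List Step)) (ds : List ℕ) : Prop :=
  As.length = ds.length ∧ (∀ A ∈ As, HUBlock A) ∧ (∀ k ∈ ds, 0 < k) ∧ w = joinAM As ds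

/-- An Asinowski–Mansour path with n up, n down, n horizontal steps. -/
def IsAM (n : ℕ) (w : List Step) : Prop :=
  IsMotzkin w ∧ w.count Step.u = n ∧ w.count Step.d = n ∧ w.count Step.h = n ∧
    ∃ As ds, AMDecomp w As ds

/-- A Dyck path with n up and n down steps, encoded over the alphabet Step. -/
def IsDyck (n : ℕ) (w : List Step) : Prop :=
  (∀ s ∈ w, s = Step.u ∨ s = Step.d) ∧ w.count Step.u = n ∧ w.count Step.d = n ∧
    NonnegPrefixes w

/-- Height of the path at the start of step i. -/
def heightAt (w : List Step) (i : ℕ) : ℤ := hsum (w.take i)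

/-- Two horizontal steps at positions i < j, at the same height, with all steps
strictly between them at or above that height. -/
def Matched (w : List Step) (i j : ℕ) : Prop :=
  i < j ∧ w[i]? = some Step.h ∧ w[j]? = some Step.h ∧
    heightAt w i = heightAt w j ∧ ∀ k, i < k → k < j → heightAt w i ≤ heightAt w k

/-- Positions of the horizontal steps of w, from left to right. -/
def hPositions (w : List Step) : List ℕ := List.findIdxs (fun s => s = Step.h) w

/-- Lexicographic (weak) order on lists of naturals. -/
def LexLe (l l' : List ℕ) : Prop := l = l' ∨ List.Lex (· < ·) l l'

/-- w is an S-Motzkin word obtained by inserting horizontal steps into D. -/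
def ValidIns (D w : List Step) : Prop :=
  (∃ m, IsSMotzkin m w) ∧ w.filter (fun s => s ≠ Step.h) = D

/-- w is the greedy h-insertion into D: each h leftmost, i.e. the list of positions
of the h's is lexicographically minimal among all valid insertions. -/
def GreedyFor (D w : List Step) : Prop :=
  ValidIns D w ∧ ∀ w', ValidIns D w' → LexLe (hPositions w) (hPositions w')

lemma hsum_append (a b : List Step) : hsum (a ++ b) = hsum a + hsum b := by
  simp [hsum]

lemma huWord_succ (n : ℕ) : huWord (n+1) = Step.h :: Step.u :: huWord n := by
  simp [huWord, List.replicate_succ]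

lemma chain_u_huWord (n : ℕ) : List.Chain' (· ≠ ·) (Step.u :: huWord n) := by
  induction n with
  | zero => simp [huWord, List.Chain']
  | succ n ih =>
    rw [huWord_succ]
    exact List.IsChain.cons_cons (by decide) (List.IsChain.cons_cons (by decide) ih)

lemma chain_huWord (n : ℕ) : List.Chain' (· ≠ ·) (huWord n) :=
  (chain_u_huWord n).tail

lemma lex_map_succ {l l' : List ℕ} (h : List.Lex (· < ·) l l') :
    List.Lex (· < ·) (l.map (· + 1)) (l'.map (· + 1)) := by
  induction h with
  | nil => exact List.Lex.nil
  | cons _ ih => exact List.Lex.cons ih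
  | rel h => exact List.Lex.rel (by simpa using Nat.add_lt_add_right h 1)

lemma lex_swap (x y : List Step) :
    List.Lex (· < ·) (hPositions (x ++ Step.h :: Step.d :: y))
      (hPositions (x ++ Step.d :: Step.h :: y)) := by
  induction x with
  | nil =>
    simp only [List.nil_append, hPositions, List.findIdxs_cons]
    norm_num
    exact List.Lex.rel (by omega)
  | cons a x ih =>
    simp only [List.cons_append, hPositions, List.findIdxs_cons] at ih ⊢
    rw [List.findIdxs_start (s := 0+1), List.findIdxs_start (s := 0+1)]
    cases hb : (decide (a = Step.h)) with
    | true => simpa using List.Lex.cons (a := 0) (lex_map_succ ih)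
    | false => simpa using lex_map_succ ih

lemma heightAt_succ (w : List Step) (k : ℕ) (hk : k < w.length) :
    heightAt w (k+1) = heightAt w k + stepVal w[k] := by
  rw [heightAt, heightAt, List.take_succ, hsum_append, List.getElem?_eq_getElem hk]
  simp [hsum]

lemma key_no_matched (D w : List Step) (hw : GreedyFor D w) :
    ∀ j i, ¬ Matched w i j := by
  intro j
  induction j using Nat.strong_induction_on with
  | _ j IH =>
  intro i hm
  obtain ⟨hij, hi, hj, hHeq, hmin⟩ := hm
  obtain ⟨hjlen, hjval⟩ := List.getElem?_eq_some_iff.mp hj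
  obtain ⟨hilen, hival⟩ := List.getElem?_eq_some_iff.mp hi
  obtain ⟨m, rfl⟩ : ∃ m, j = m + 1 := ⟨j-1, by omega⟩
  have hmlen : m < w.length := by omega
  have hdecomp : w = w.take m ++ w[m] :: w[m+1] :: w.drop (m+2) := by
    conv_lhs => rw [← List.take_append_drop m w]
    rw [List.drop_eq_getElem_cons hmlen, List.drop_eq_getElem_cons hjlen]
  cases hwm : w[m] with
  | h =>
    rcases eq_or_lt_of_le (Nat.lt_succ_iff.mp hij) with he | hlt
    · -- adjacent h h : contradiction with huWord structure
      obtain ⟨⟨N, hS⟩, _⟩ := hw.1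
      have hfil := hS.2.2.2.2
      rw [hdecomp, hwm, hjval] at hfil
      rw [List.filter_append] at hfil
      simp only [List.filter_cons] at hfil
      norm_num at hfil
      have hinf : [Step.h, Step.h] <:+: huWord N := by
        refine ⟨List.filter (fun s => decide ¬s = Step.d) (w.take m),
          List.filter (fun s => decide ¬s = Step.d) (w.drop (m+2)), ?_⟩
        rw [← hfil]; simp
      have := (chain_huWord N).infix hinf
      simp at this
    · -- matched (i, m) with smaller second index
      have hm' : heightAt w (m+1) = heightAt w m := by
        have h1 := heightAt_succ w m hmlen
        rw [hwm] at h1; simp [stepVal] at h1; linarith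
      exact IH m (by omega) i ⟨hlt, hi, List.getElem?_eq_some_iff.mpr ⟨hmlen, hwm⟩,
        by rw [hHeq, hm'], fun k hk1 hk2 => hmin k hk1 (by omega)⟩
  | u =>
    have hlt : i < m := by
      rcases eq_or_lt_of_le (Nat.lt_succ_iff.mp hij) with he | hlt
      · exfalso
        have h2 : w[m]? = some Step.h := he ▸ hi
        rw [List.getElem?_eq_getElem hmlen, hwm] at h2
        exact Step.noConfusion (Option.some.inj h2)
      · exact hlt
    have h1 := heightAt_succ w m hmlen
    rw [hwm] at h1; simp [stepVal] at h1
    have h2 := hmin m hlt (by omega)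
    rw [hHeq] at h2
    linarith
  | d =>
    -- the swap construction
    obtain ⟨⟨N, hS⟩, hfilD⟩ := hw.1
    obtain ⟨⟨hnn, hz⟩, hcu, hcd, hch, hfil⟩ := hS
    have hdec : w = w.take m ++ Step.d :: Step.h :: w.drop (m+2) := by
      rw [hwm, hjval] at hdecomp; exact hdecomp
    set x := w.take m with hx
    set y := w.drop (m+2) with hy
    set w' := x ++ Step.h :: Step.d :: y with hw'
    have key_take : ∀ k, hsum (w.take k) ≤ hsum (w'.take k) := by
      intro k
      conv_lhs => rw [hdec]
      rw [hw', List.take_append, List.take_append,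
        hsum_append, hsum_append]
      have haux : ∀ r : ℕ, ∀ z : List Step,
          hsum ((Step.d :: Step.h :: z).take r) ≤ hsum ((Step.h :: Step.d :: z).take r) := by
        intro r z
        match r with
        | 0 => simp
        | 1 => simp [hsum, stepVal]
        | (r+2) =>
          simp [List.take_succ_cons, hsum, stepVal]
      linarith [haux (k - x.length) y]
    have hvalid : ValidIns D w' := by
      constructor
      · refine ⟨N, ⟨⟨?_, ?_⟩, ?_, ?_, ?_, ?_⟩⟩
        · intro p hp
          rw [List.prefix_iff_eq_take.mp hp]
          calc (0:ℤ) ≤ hsum (w.take p.length) := hnn _ (List.take_prefix _ _)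
            _ ≤ _ := key_take _
        · rw [hdec] at hz
          rw [hw'] at *
          rw [hsum_append] at *
          simp only [hsum, List.map_cons, List.sum_cons, stepVal] at *
          linarith
        · rw [hdec] at hcu; rw [hw']
          simp [List.count_append, List.count_cons] at hcu ⊢; omega
        · rw [hdec] at hcd; rw [hw']
          simp [List.count_append, List.count_cons] at hcd ⊢; omega
        · rw [hdec] at hch; rw [hw']
          simp [List.count_append, List.count_cons] at hch ⊢; omega
        · rw [hdec] at hfil; rw [hw']
          rw [List.filter_append] at hfil ⊢
          simp only [List.filter_cons] at hfil ⊢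
          norm_num at hfil ⊢
          exact hfil
      · rw [hdec] at hfilD; rw [hw']
        rw [List.filter_append] at hfilD ⊢
        simp only [List.filter_cons] at hfilD ⊢
        norm_num at hfilD ⊢
        exact hfilD
    have hg := hw.2 w' hvalid
    have hlex := lex_swap x y
    rw [← hw', ← hdec] at hlex
    rcases hg with he | hlt'
    · rw [he] at hlex; exact absurd hlex (irrefl _)
    · exact absurd hlex (asymm hlt')

/-- the greedy h-insertion into a Dyck path has no two horizontal steps
at the same height with all intermediate steps at or above that height. -/
theorem greedy_no_matched_pair (n : ℕ) (D w : List Step)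
    (hD : IsDyck n D) (hw : GreedyFor D w) :
    ¬ ∃ i j, Matched w i j := by
  rintro ⟨i, j, hm⟩
  exact key_no_matched D w hw j i hm
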